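/- Let R be a transitive partial applicative structure satisfying property 1W and property TO. Then R satisfies property TL: for every r ∈ R, the partial function [r] is TL. -/
import Mathlib


/-- Application lifted to partially-defined arguments: `oapp op x y` is the
value of the applicative term `x · y`, where `x`, `y` may be undefined. -/
def oapp {R : Type} (op : R → R → Option R) (x y : Option R) : Option R :=
  x.bind fun a => y.bind fun b => op a b

/-- The indexed entailment relation `φ ⊢_I ψ` on `P(R)^I` induced by a PAS. -/
def Entails {R : Type} (op : R → R → Option R) {I : Type} (φ ψ : I → Set R) : Prop :=
  ∃ r : R, ∀ i : I, ∀ a ∈ φ i, ∃ b : R, op r a = some b ∧ b ∈ ψ i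

/-- The entailment relation `A ⊢ B` on `P(R)` induced by a PAS. -/
def Entails1 {R : Type} (op : R → R → Option R) (A B : Set R) : Prop :=
  ∃ r : R, ∀ a ∈ A, ∃ b : R, op r a = some b ∧ b ∈ B

/-- `piter f n a` is the `n`-th iterate `f^n(a)` of the partial function `f` at `a`. -/
def piter {R : Type} (f : R → Option R) : ℕ → R → Option R
  | 0 => fun a => some a
  | n + 1 => fun a => (piter f n a).bind f

/-- A partial function is TO if every point has finite odd order or finite divergence. -/
def TOfun {R : Type} (f : R → Option R) : Prop :=
  ∀ a : R,
    (∃ n : ℕ, (1 ≤ n ∧ piter f n a = some a ∧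
        ∀ m : ℕ, 1 ≤ m → piter f m a = some a → n ≤ m) ∧ Odd n) ∨
    (∃ n : ℕ, 1 ≤ n ∧ piter f n a = none)

/-- A partial function is TL if every point is a fixed point or has finite divergence. -/
def TLfun {R : Type} (f : R → Option R) : Prop :=
  ∀ a : R, f a = some a ∨ (∃ n : ℕ, 1 ≤ n ∧ piter f n a = none)

theorem piter_add' {R : Type} (f : R → Option R) (m n : ℕ) (a : R) :
    piter f (m + n) a = (piter f n a).bind (piter f m) := by
  induction m with
  | zero => simp [piter]
  | succ m ih =>
    have h : m + 1 + n = (m + n) + 1 := by omega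
    rw [h]
    show (piter f (m + n) a).bind f = _
    rw [ih, Option.bind_assoc]
    rfl

/-- A transitive PAS satisfying 1W and TO satisfies TL. -/
theorem stmt_14 {R : Type} [Nonempty R] (op : R → R → Option R)
    (hTrans : ∀ (I : Type) (φ ψ ρ : I → Set R),
      Entails op φ ψ → Entails op ψ ρ → Entails op φ ρ)
    (h1W : ∀ r s a b : R, op r a = some b → op s b = some a → a = b)
    (hTO : ∀ r : R, TOfun (fun a => op r a)) :
    ∀ r : R, TLfun (fun a => op r a) := by
  intro r a
  rcases hTO r a with ⟨n, ⟨hn1, hfix, _⟩, _⟩ | hdiv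
  · left
    set f : R → Option R := fun a => op r a with hf
    have key : ∀ m, piter f (m + n) a = piter f m a := by
      intro m; rw [piter_add', hfix]; rfl
    have alldef : ∀ k, ∃ b, piter f k a = some b := by
      intro k
      induction k using Nat.strong_induction_on with
      | _ k ih =>
        rcases le_or_gt k n with h | h
        · have h2 := piter_add' f (n - k) k a
          rw [show n - k + k = n by omega, hfix] at h2
          cases hk : piter f k a with
          | none => rw [hk] at h2; simp at h2
          | some b => exact ⟨b, rfl⟩
        · have e : k - n + n = k := by omega
          rw [← e, key]
          exact ih (k - n) (by omega)
    set φ : ℕ → Set R := fun k => {x : R | piter f k a = some x} with hφ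
    have step : ∀ m : ℕ, Entails op (fun k => φ (k + m)) (fun k => φ (k + m + 1)) := by
      intro m
      refine ⟨r, fun k x hx => ?_⟩
      obtain ⟨b, hb⟩ := alldef (k + m + 1)
      refine ⟨b, ?_, hb⟩
      have h3 : piter f (k + m + 1) a = (piter f (k + m) a).bind f := rfl
      have hx' : piter f (k + m) a = some x := hx
      rw [hb, hx'] at h3
      simpa using h3.symm
    have main : ∀ m : ℕ, 1 ≤ m → Entails op φ (fun k => φ (k + m)) := by
      intro m hm
      induction m, hm using Nat.le_induction with
      | base => exact step 0
      | succ m hm ih => exact hTrans ℕ _ _ _ ih (step m)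
    by_cases hn : n = 1
    · subst hn
      have h1 : piter f 1 a = some a := hfix
      simpa [piter] using h1
    · obtain ⟨s, hs⟩ := main (n - 1) (by omega)
      obtain ⟨a1, ha1⟩ := alldef 1
      have ha1' : op r a = some a1 := by simpa [piter] using ha1
      obtain ⟨b, hb, hbmem⟩ := hs 1 a1 ha1
      have hbn : piter f n a = some b := by
        have e : 1 + (n - 1) = n := by omega
        rw [← e]; exact hbmem
      rw [hfix] at hbn
      have hba : a = b := Option.some_injective R hbn
      subst hba
      have : a = a1 := h1W r s a a1 ha1' hb
      show op r a = some a
      rw [ha1', this]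
  · exact Or.inr hdiv
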